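/- Let (X,T) be a minimal Cantor system and let μ be a T-invariant Borel probability measure. If f ∈ C(X,ℤ) is balanced for (X,T), then ∫ f dμ is an additive continuous eigenvalue of (X,T): there exists a continuous function g : X → ℂ, not identically zero, such that g∘T = exp(2πi ∫ f dμ) · g. -/
import Mathlib


open MeasureTheory Filter

/-- `μ` is a `T`-invariant Borel probability measure. -/
def InvProb {Y : Type*} [MeasurableSpace Y] (T : Y → Y) (μ : Measure Y) : Prop :=
  IsProbabilityMeasure μ ∧ MeasurePreserving T μ μ

/-- A real-valued function is balanced for the dynamical system given by `T`. -/
def IsBalanced {Y : Type*} (T : Y → Y) (f : Y → ℝ) : Prop :=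
  ∃ C : ℝ, 0 < C ∧ ∀ x y : Y, ∀ n : ℕ,
    |∑ i ∈ Finset.range (n + 1), (f (T^[i] x) - f (T^[i] y))| ≤ C

open Set Topology in
/-- Gottschalk–Hedlund: bounded partial sums at one point for a minimal system
give a continuous transfer function. -/
theorem gottschalk_hedlund {X : Type*} [TopologicalSpace X] [CompactSpace X] [T2Space X]
    (T : X → X) (hT : Continuous T)
    (hmin : ∀ F : Set X, IsClosed F → (∀ x ∈ F, T x ∈ F) → F = ∅ ∨ F = Set.univ)
    (φ : X → ℝ) (hφ : Continuous φ) (x₀ : X) (C : ℝ)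
    (hC : ∀ n : ℕ, |∑ i ∈ Finset.range n, φ (T^[i] x₀)| ≤ C) :
    ∃ u : X → ℝ, Continuous u ∧ ∀ x, u (T x) = u x + φ x := by
  classical
  -- the skew product
  set S : X × ℝ → X × ℝ := fun p => (T p.1, p.2 + φ p.1) with hS
  have hScont : Continuous S := by fun_prop
  -- the orbit of (x₀, 0)
  have horb : ∀ n : ℕ, S^[n] (x₀, 0) = (T^[n] x₀, ∑ i ∈ Finset.range n, φ (T^[i] x₀)) := by
    intro n
    induction n with
    | zero => simp
    | succ n ih =>
      rw [Function.iterate_succ_apply', ih, Function.iterate_succ_apply']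
      simp [hS, Finset.sum_range_succ]
  set orb : Set (X × ℝ) := Set.range (fun n => S^[n] (x₀, 0)) with horbdef
  have horbS : S '' orb ⊆ orb := by
    rintro p ⟨q, ⟨n, rfl⟩, rfl⟩
    exact ⟨n + 1, show S^[n+1] (x₀,0) = S (S^[n] (x₀,0)) from Function.iterate_succ_apply' S n _⟩
  set B : Set (X × ℝ) := Set.univ ×ˢ Icc (-C) C with hB
  have hBc : IsCompact B := isCompact_univ.prod isCompact_Icc
  have horbB : orb ⊆ B := by
    rintro p ⟨n, rfl⟩
    show S^[n] (x₀,0) ∈ B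
    rw [horb n]
    exact ⟨trivial, abs_le.mp (hC n)⟩
  set Ω : Set (X × ℝ) := closure orb with hΩ
  have hΩB : Ω ⊆ B := closure_minimal horbB hBc.isClosed
  have hΩcomp : IsCompact Ω := hBc.of_isClosed_subset isClosed_closure hΩB
  have hΩS : S '' Ω ⊆ Ω :=
    (image_closure_subset_closure_image hScont).trans (closure_mono horbS)
  have hΩne : Ω.Nonempty := (Set.range_nonempty _).closure
  -- find a minimal invariant compact subset via Zorn
  set 𝒞 : Set (Set (X × ℝ)) := {K | K.Nonempty ∧ K ⊆ Ω ∧ IsClosed K ∧ S '' K ⊆ K} with h𝒞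
  obtain ⟨K, -, hKmem, hKmin⟩ :
      ∃ K, K ⊆ Ω ∧ (K ∈ 𝒞) ∧ ∀ K' ∈ 𝒞, K' ⊆ K → K' = K := by
    have hzorn : ∀ c ⊆ 𝒞, IsChain (· ⊆ ·) c → c.Nonempty →
        ∃ lb ∈ 𝒞, ∀ s ∈ c, lb ⊆ s := by
      intro c hc hchain hcne
      refine ⟨⋂₀ c, ⟨?_, ?_, ?_, ?_⟩, fun s hs => sInter_subset_of_mem hs⟩
      · have : Nonempty c := hcne.to_subtype
        apply IsCompact.nonempty_sInter_of_directed_nonempty_isCompact_isClosed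
        · exact IsChain.directedOn hchain.symm
        · exact fun U hU => (hc hU).1
        · exact fun U hU => hΩcomp.of_isClosed_subset (hc hU).2.2.1 (hc hU).2.1
        · exact fun U hU => (hc hU).2.2.1
      · obtain ⟨s, hs⟩ := hcne
        exact (sInter_subset_of_mem hs).trans (hc hs).2.1
      · exact isClosed_sInter fun U hU => (hc hU).2.2.1
      · rintro p ⟨q, hq, rfl⟩
        exact fun U hU => (hc hU).2.2.2 ⟨q, (sInter_subset_of_mem hU) hq, rfl⟩
    obtain ⟨K, hKsub, hKmin⟩ := zorn_superset_nonempty 𝒞 hzorn Ω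
      ⟨hΩne, le_rfl, isClosed_closure, hΩS⟩
    exact ⟨K, hKsub, hKmin.prop, fun K' h1 h2 => hKmin.eq_of_subset h1 h2⟩
  obtain ⟨hKne, hKΩ, hKcl, hKS⟩ := hKmem
  have hKcomp : IsCompact K := hΩcomp.of_isClosed_subset hKcl hKΩ
  have hKB : K ⊆ B := hKΩ.trans hΩB
  -- first projection of K is all of X
  have hproj : Prod.fst '' K = Set.univ := by
    have hfwd : ∀ x ∈ Prod.fst '' K, T x ∈ Prod.fst '' K := by
      rintro x ⟨p, hp, rfl⟩
      exact ⟨S p, hKS ⟨p, hp, rfl⟩, rfl⟩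
    rcases hmin (Prod.fst '' K) (hKcomp.image continuous_fst).isClosed hfwd with h | h
    · exact absurd h (hKne.image Prod.fst).ne_empty
    · exact h
  -- K is a graph
  have hgraph : ∀ x : X, ∀ t s : ℝ, (x, t) ∈ K → (x, s) ∈ K → t = s := by
    -- key: if K ⊆ translate of K by c with c > 0, contradiction
    have key : ∀ c : ℝ, 0 < c → ∀ x t s, (x, t) ∈ K → (x, s) ∈ K → s - t ≠ c := by
      intro c hc x t s hxt hxs hst
      set τ : X × ℝ → X × ℝ := fun p => (p.1, p.2 + c) with hτ
      have hτcont : Continuous τ := by fun_prop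
      have hτS : ∀ p, τ (S p) = S (τ p) := by intro p; simp [hτ, hS]; ring
      -- K ∩ τ '' K is in 𝒞 ... need it's nonempty: (x, s) = τ (x, t)
      have hsub : K ⊆ τ '' K := by
        have hmem : K ∩ τ '' K ∈ 𝒞 := by
          refine ⟨⟨(x, s), hxs, ⟨(x, t), hxt, by simp [hτ, ← hst]⟩⟩,
            (inter_subset_left).trans hKΩ, hKcl.inter ?_, ?_⟩
          · exact (hKcomp.image hτcont).isClosed
          · rintro p ⟨q, ⟨hq1, r, hr, rfl⟩, rfl⟩
            exact ⟨hKS ⟨τ r, hq1, rfl⟩, S r, hKS ⟨r, hr, rfl⟩, hτS r⟩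
        have h2 := hKmin _ hmem inter_subset_left
        exact fun p hp => ((Set.ext_iff.mp h2.symm p).mp hp).2
      -- iterate: (x, t - n*c) ∈ K for all n
      have hiter : ∀ n : ℕ, (x, t - n * c) ∈ K := by
        intro n
        induction n with
        | zero => simpa using hxt
        | succ n ih =>
          obtain ⟨⟨y, r⟩, hyr, heq⟩ := hsub ih
          have h1 : y = x := congrArg Prod.fst heq
          have h2 : r + c = t - n * c := congrArg Prod.snd heq
          have : r = t - (n + 1 : ℕ) * c := by push_cast; linarith
          rwa [← h1, ← this]
      -- contradiction with boundedness
      obtain ⟨n, hn⟩ := exists_nat_gt ((t + C) / c)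
      have hmem := hKB (hiter n)
      have : -C ≤ t - n * c := hmem.2.1
      have h3 : t + C < n * c := (div_lt_iff₀ hc).mp hn
      linarith
    intro x t s hxt hxs
    by_contra hne
    rcases lt_or_gt_of_ne hne with h | h
    · exact key (s - t) (by linarith) x t s hxt hxs rfl
    · exact key (t - s) (by linarith) x s t hxs hxt rfl
  -- define u
  have hex : ∀ x : X, ∃ t, (x, t) ∈ K := by
    intro x
    have : x ∈ Prod.fst '' K := hproj ▸ Set.mem_univ x
    obtain ⟨⟨y, t⟩, hp, rfl⟩ := this
    exact ⟨t, hp⟩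
  choose u hu using hex
  have huniq : ∀ x t, (x, t) ∈ K → u x = t := fun x t ht => hgraph x (u x) t (hu x) ht
  refine ⟨u, ?_, ?_⟩
  · rw [continuous_iff_isClosed]
    intro A hA
    have : u ⁻¹' A = Prod.fst '' (K ∩ Prod.snd ⁻¹' A) := by
      ext x
      constructor
      · intro hx
        exact ⟨(x, u x), ⟨hu x, hx⟩, rfl⟩
      · rintro ⟨⟨y, t⟩, ⟨hK', hA'⟩, rfl⟩
        simpa [huniq _ _ hK'] using hA'
    rw [this]
    exact ((hKcomp.inter_right (hA.preimage continuous_snd)).image continuous_fst).isClosed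
  · intro x
    have : S (x, u x) ∈ K := hKS ⟨(x, u x), hu x, rfl⟩
    exact huniq (T x) (u x + φ x) this

theorem stmt15 {X : Type*} [TopologicalSpace X] [CompactSpace X] [TopologicalSpace.MetrizableSpace X]
    [TotallyDisconnectedSpace X] [MeasurableSpace X] [BorelSpace X]
    (hni : ∀ x : X, ¬IsOpen ({x} : Set X))
    (T : X ≃ₜ X)
    (hmin : ∀ F : Set X, IsClosed F → (∀ x ∈ F, T x ∈ F) → F = ∅ ∨ F = Set.univ)
    (μ : Measure X) (hμ : InvProb (⇑T) μ)
    (f : C(X, ℤ)) (hbal : IsBalanced (⇑T) (fun x => (f x : ℝ))) :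
    ∃ g : C(X, ℂ), g ≠ 0 ∧ ∀ x : X,
      g (T x) = Complex.exp (2 * (Real.pi : ℂ) * Complex.I * ((∫ x, (f x : ℝ) ∂μ : ℝ) : ℂ)) * g x := by
  classical
  obtain ⟨hprob, hmp⟩ := hμ
  obtain ⟨C, hCpos, hbal'⟩ := hbal
  set α : ℝ := ∫ x, (f x : ℝ) ∂μ with hα
  -- X is nonempty
  have hXne : Nonempty X := by
    by_contra h
    have huniv : (Set.univ : Set X) = ∅ :=
      Set.univ_eq_empty_iff.mpr (not_nonempty_iff.mp h)
    have h1 : μ Set.univ = 1 := measure_univ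
    rw [huniv, measure_empty] at h1
    exact one_ne_zero h1.symm
  obtain ⟨x₀⟩ := hXne
  -- continuity and integrability facts
  have hfc : Continuous (fun x : X => ((f x : ℤ) : ℝ)) := by fun_prop
  have hint : ∀ i : ℕ, Integrable (fun y : X => ((f ((⇑T)^[i] y) : ℤ) : ℝ)) μ := by
    intro i
    have hc : Continuous (fun y : X => ((f ((⇑T)^[i] y) : ℤ) : ℝ)) :=
      hfc.comp (T.continuous.iterate i)
    exact hc.integrable_of_hasCompactSupport (HasCompactSupport.of_compactSpace _)
  -- ∫ f ∘ T^[i] = α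
  have hTint : ∀ i : ℕ, ∫ y, ((f ((⇑T)^[i] y) : ℤ) : ℝ) ∂μ = α := by
    intro i
    induction i with
    | zero => simp [hα]
    | succ i ih =>
      have hmp' : MeasurePreserving (⇑T.toMeasurableEquiv) μ μ := hmp
      have := hmp'.integral_comp' (f := T.toMeasurableEquiv)
        (g := fun y : X => ((f ((⇑T)^[i] y) : ℤ) : ℝ))
      rw [← ih, ← this]
      refine integral_congr_ae (Eventually.of_forall fun y => ?_)
      simp only [Function.iterate_succ_apply, Homeomorph.toMeasurableEquiv_coe]
  -- the bound for Gottschalk--Hedlund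
  have hbound : ∀ n : ℕ, |∑ i ∈ Finset.range n, (α - ((f ((⇑T)^[i] x₀) : ℤ) : ℝ))| ≤ C := by
    intro n
    match n with
    | 0 => simpa using hCpos.le
    | (m + 1) =>
      have hsum : ∑ i ∈ Finset.range (m+1), (α - ((f ((⇑T)^[i] x₀) : ℤ) : ℝ))
          = ∫ y, (∑ i ∈ Finset.range (m+1),
              (((f ((⇑T)^[i] y) : ℤ) : ℝ) - ((f ((⇑T)^[i] x₀) : ℤ) : ℝ))) ∂μ := by
        rw [integral_finset_sum]
        · refine Finset.sum_congr rfl fun i _ => ?_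
          rw [integral_sub (hint i) (integrable_const _), hTint i, integral_const]
          simp [measure_univ]
        · intro i _
          exact (hint i).sub (integrable_const _)
      rw [hsum]
      have := norm_integral_le_of_norm_le_const (μ := μ)
        (f := fun y => (∑ i ∈ Finset.range (m+1),
              (((f ((⇑T)^[i] y) : ℤ) : ℝ) - ((f ((⇑T)^[i] x₀) : ℤ) : ℝ)))) (C := C)
        (Eventually.of_forall fun y => by
          rw [Real.norm_eq_abs]
          exact hbal' y x₀ m)
      simpa [measure_univ, Real.norm_eq_abs] using this
  -- apply Gottschalk--Hedlund
  obtain ⟨u, hucont, hu⟩ := gottschalk_hedlund (⇑T) T.continuous hmin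
    (fun x => α - ((f x : ℤ) : ℝ)) (by fun_prop) x₀ C hbound
  refine ⟨⟨fun x => Complex.exp (2 * (Real.pi : ℂ) * Complex.I * (u x : ℂ)), by fun_prop⟩, ?_, ?_⟩
  · intro h
    have := DFunLike.congr_fun h x₀
    simp only [ContinuousMap.coe_mk, ContinuousMap.zero_apply] at this
    exact Complex.exp_ne_zero _ this
  · intro x
    simp only [ContinuousMap.coe_mk]
    rw [← Complex.exp_add]
    have hkey : 2 * (Real.pi : ℂ) * Complex.I * ((u (T x) : ℝ) : ℂ)
        = 2 * (Real.pi : ℂ) * Complex.I * ((α : ℝ) : ℂ)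
          + 2 * (Real.pi : ℂ) * Complex.I * ((u x : ℝ) : ℂ)
          + ((- (f x) : ℤ) : ℂ) * (2 * (Real.pi : ℂ) * Complex.I) := by
      rw [hu x]
      push_cast
      ring
    rw [hkey, Complex.exp_add, Complex.exp_int_mul_two_pi_mul_I]
    ring
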